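/- If G is a d-regular graph with chromatic index d+1 (Vizing class 2), then the proper additive chromatic index of G is at most ((2^⌈log₂(d+1)⌉)² + 2)/3. In particular, if d+1 = 2ⁿ for some n > 0, then η'_p(G) ≤ ((d+1)² + 2)/3. -/

import Mathlib

open scoped Classical
open Finset

namespace AddEdge

variable {V : Type*} [Fintype V] [DecidableEq V]

/-- `N'(e)`-sum: the sum of the colors of the edges of `G` sharing an endpoint
with `e`, excluding `e` itself. -/
noncomputable def nbrSum (G : SimpleGraph V) (c : Sym2 V → ℕ) (e : Sym2 V) : ℕ :=
  ∑ f ∈ univ.filter (fun f => f ∈ G.edgeSet ∧ f ≠ e ∧ ∃ v, v ∈ e ∧ v ∈ f), c f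

/-- `c` is a proper edge coloring of `G`: distinct incident edges get distinct colors. -/
def IsProperEdgeColoring (G : SimpleGraph V) (c : Sym2 V → ℕ) : Prop :=
  ∀ e ∈ G.edgeSet, ∀ f ∈ G.edgeSet, e ≠ f → (∃ v, v ∈ e ∧ v ∈ f) → c e ≠ c f

/-- `c` is an additive edge coloring of `G`: distinct incident edges have distinct
sums of colors over their incident-edge neighborhoods. -/
def IsAdditiveEdgeColoring (G : SimpleGraph V) (c : Sym2 V → ℕ) : Prop :=
  ∀ e ∈ G.edgeSet, ∀ f ∈ G.edgeSet, e ≠ f → (∃ v, v ∈ e ∧ v ∈ f) →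
    nbrSum G c e ≠ nbrSum G c f

/-- The chromatic index: the least `k` such that `G` has a proper edge coloring
with colors from `{1, …, k}`. -/
noncomputable def chromIndex (G : SimpleGraph V) : ℕ :=
  sInf {k | ∃ c : Sym2 V → ℕ, (∀ e ∈ G.edgeSet, c e ∈ Finset.Icc 1 k) ∧
    IsProperEdgeColoring G c}

/-- The proper additive chromatic index `η'_p(G)`: the least `k` such that `G` has an
edge coloring with colors from `{1, …, k}` that is both proper and additive. -/
noncomputable def properAddIndex (G : SimpleGraph V) : ℕ :=
  sInf {k | ∃ c : Sym2 V → ℕ, (∀ e ∈ G.edgeSet, c e ∈ Finset.Icc 1 k) ∧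
    IsProperEdgeColoring G c ∧ IsAdditiveEdgeColoring G c}


def phi : ℕ → ℕ
  | 0 => 0
  | n+1 => 4 * phi ((n+1)/2) + (n+1) % 2
decreasing_by exact Nat.div_lt_self (Nat.succ_pos _) one_lt_two

lemma phi_rec (m : ℕ) : phi m = 4 * phi (m / 2) + m % 2 := by
  cases m with
  | zero => simp [phi]
  | succ n => rw [phi]

lemma phi_key : ∀ s x y x' y', x + y + x' + y' ≤ s →
    phi x + 2 * phi y = phi x' + 2 * phi y' → x = x' ∧ y = y' := by
  intro s
  induction s with
  | zero => intro x y x' y' hs _; omega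
  | succ s ih =>
    intro x y x' y' hs h
    rcases Nat.eq_zero_or_pos (x + y + x' + y') with h0 | hp
    · omega
    · rw [phi_rec x, phi_rec y, phi_rec x', phi_rec y'] at h
      have e1 : phi (x/2) + 2 * phi (y/2) = phi (x'/2) + 2 * phi (y'/2)
          ∧ x % 2 = x' % 2 ∧ y % 2 = y' % 2 := by
        revert h
        generalize phi (x/2) = a
        generalize phi (y/2) = b
        generalize phi (x'/2) = a'
        generalize phi (y'/2) = b'
        intro h
        omega
      obtain ⟨hx, hy⟩ := ih (x/2) (y/2) (x'/2) (y'/2) (by omega) e1.1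
      omega

lemma phi_bound : ∀ n m, m < 2^n → 3 * phi m + 1 ≤ 4^n := by
  intro n
  induction n with
  | zero => intro m hm; interval_cases m; simp [phi]
  | succ n ih =>
    intro m hm
    have h2 : m / 2 < 2^n := by
      have : (2:ℕ)^(n+1) = 2 * 2^n := by ring
      omega
    have hb := ih (m/2) h2
    rw [phi_rec m]
    have h4 : (4:ℕ)^(n+1) = 4 * 4^n := by ring
    revert hb h4
    generalize phi (m/2) = a
    generalize (4:ℕ)^n = P
    generalize (4:ℕ)^(n+1) = Q
    intro hb h4
    omega

lemma phi_inj {a b : ℕ} (h : phi a = phi b) : a = b :=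
  (phi_key (a + b + b + b) a b b b le_rfl (by omega)).1

lemma nbrSum_eq (G : SimpleGraph V) (c : Sym2 V → ℕ) {u v : V} (h : G.Adj u v) :
    nbrSum G c s(u,v) + 2 * c s(u,v) =
      (∑ f ∈ G.incidenceFinset u, c f) + (∑ f ∈ G.incidenceFinset v, c f) := by
  have hne : u ≠ v := h.ne
  have hmem : s(u,v) ∈ G.edgeSet := h
  have hAB : G.incidenceFinset u ∩ G.incidenceFinset v = {s(u,v)} := by
    ext f
    simp only [mem_inter, SimpleGraph.mem_incidenceFinset, SimpleGraph.incidenceSet,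
      Set.mem_setOf_eq, mem_singleton]
    constructor
    · rintro ⟨⟨h1, h2⟩, ⟨h3, h4⟩⟩
      exact (Sym2.mem_and_mem_iff hne).mp ⟨h2, h4⟩
    · rintro rfl
      exact ⟨⟨hmem, by simp⟩, ⟨hmem, by simp⟩⟩
  have hfilt : univ.filter (fun f => f ∈ G.edgeSet ∧ f ≠ s(u,v) ∧ ∃ w, w ∈ s(u,v) ∧ w ∈ f)
      = ((G.incidenceFinset u ∪ G.incidenceFinset v).erase s(u,v)) := by
    ext f
    simp only [mem_filter, mem_univ, true_and, mem_erase, mem_union,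
      SimpleGraph.mem_incidenceFinset, SimpleGraph.incidenceSet, Set.mem_setOf_eq,
      Sym2.mem_iff]
    constructor
    · rintro ⟨h1, h2, w, hw1, hw2⟩
      rcases hw1 with rfl | rfl
      · exact ⟨h2, Or.inl ⟨h1, hw2⟩⟩
      · exact ⟨h2, Or.inr ⟨h1, hw2⟩⟩
    · rintro ⟨h2, (⟨h1, hu⟩ | ⟨h1, hv⟩)⟩
      · exact ⟨h1, h2, u, Or.inl rfl, hu⟩
      · exact ⟨h1, h2, v, Or.inr rfl, hv⟩
  have hein : s(u,v) ∈ G.incidenceFinset u ∪ G.incidenceFinset v := by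
    simp only [mem_union, SimpleGraph.mem_incidenceFinset, SimpleGraph.incidenceSet,
      Set.mem_setOf_eq]
    exact Or.inl ⟨hmem, by simp⟩
  have h1 := Finset.sum_erase_add (G.incidenceFinset u ∪ G.incidenceFinset v) c hein
  have h2 := Finset.sum_union_inter (s₁ := G.incidenceFinset u)
    (s₂ := G.incidenceFinset v) (f := c)
  rw [hAB, Finset.sum_singleton] at h2
  rw [nbrSum, hfilt]
  omega

lemma missing (G : SimpleGraph V) (d : ℕ) (hreg : G.IsRegularOfDegree d)
    (c₀ : Sym2 V → ℕ) (hc₀ : ∀ e ∈ G.edgeSet, c₀ e ∈ Finset.Icc 1 (d+1))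
    (hp : IsProperEdgeColoring G c₀) (c : Sym2 V → ℕ)
    (hc : ∀ e, c e = phi (c₀ e - 1) + 1) (u : V) :
    ∃ μ, (∑ f ∈ G.incidenceFinset u, c f) + (phi (μ - 1) + 1)
      = ∑ i ∈ Finset.Icc 1 (d+1), (phi (i-1) + 1) := by
  have hmemE : ∀ f ∈ G.incidenceFinset u, f ∈ G.edgeSet ∧ u ∈ f := by
    intro f hf
    rw [SimpleGraph.mem_incidenceFinset] at hf
    exact hf
  have hinj : ∀ e ∈ G.incidenceFinset u, ∀ f ∈ G.incidenceFinset u, c₀ e = c₀ f → e = f := by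
    intro e he f hf hef
    by_contra hne
    exact hp e (hmemE e he).1 f (hmemE f hf).1 hne ⟨u, (hmemE e he).2, (hmemE f hf).2⟩ hef
  have hcard : ((G.incidenceFinset u).image c₀).card = d := by
    rw [Finset.card_image_of_injOn hinj, SimpleGraph.card_incidenceFinset_eq_degree, hreg u]
  have hsub : (G.incidenceFinset u).image c₀ ⊆ Finset.Icc 1 (d+1) := by
    intro x hx
    rw [Finset.mem_image] at hx
    obtain ⟨f, hf, rfl⟩ := hx
    exact hc₀ f (hmemE f hf).1
  obtain ⟨μ, hμI, hμn⟩ : ∃ μ ∈ Finset.Icc 1 (d+1), μ ∉ (G.incidenceFinset u).image c₀ := by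
    by_contra hcon
    push_neg at hcon
    have := Finset.card_le_card hcon
    rw [hcard, Nat.card_Icc] at this
    omega
  have hins : insert μ ((G.incidenceFinset u).image c₀) = Finset.Icc 1 (d+1) := by
    apply Finset.eq_of_subset_of_card_le
    · intro x hx
      rcases Finset.mem_insert.mp hx with rfl | hx'
      · exact hμI
      · exact hsub hx'
    · rw [Finset.card_insert_of_notMem hμn, hcard, Nat.card_Icc]
      omega
  refine ⟨μ, ?_⟩
  rw [← hins, Finset.sum_insert hμn, Finset.sum_image hinj]
  have : ∀ f ∈ G.incidenceFinset u, phi (c₀ f - 1) + 1 = c f := fun f _ => (hc f).symm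
  rw [Finset.sum_congr rfl this]
  exact Nat.add_comm _ _

lemma exists_good (G : SimpleGraph V) (d n : ℕ) (hreg : G.IsRegularOfDegree d)
    (c₀ : Sym2 V → ℕ) (hc₀ : ∀ e ∈ G.edgeSet, c₀ e ∈ Finset.Icc 1 (d+1))
    (hp₀ : IsProperEdgeColoring G c₀) (hdn : d + 1 ≤ 2^n) :
    ∃ c : Sym2 V → ℕ, (∀ e ∈ G.edgeSet, c e ∈ Finset.Icc 1 ((4^n+2)/3)) ∧
      IsProperEdgeColoring G c ∧ IsAdditiveEdgeColoring G c := by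
  set c : Sym2 V → ℕ := fun e => phi (c₀ e - 1) + 1 with hcdef
  have hc : ∀ e, c e = phi (c₀ e - 1) + 1 := fun _ => rfl
  have hrange : ∀ e ∈ G.edgeSet, 1 ≤ c₀ e ∧ c₀ e ≤ d + 1 := by
    intro e he
    have := hc₀ e he
    rw [Finset.mem_Icc] at this
    exact this
  refine ⟨c, ?_, ?_, ?_⟩
  · intro e he
    rw [Finset.mem_Icc]
    have h1 : c₀ e - 1 < 2^n := by
      have := hrange e he
      omega
    have h3 := phi_bound n (c₀ e - 1) h1
    have h4 : c e = phi (c₀ e - 1) + 1 := rfl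
    refine ⟨by omega, ?_⟩
    rw [Nat.le_div_iff_mul_le (by norm_num)]
    omega
  · intro e he f hf hef hshare hcc
    rw [hc e, hc f] at hcc
    have := phi_inj (by omega : phi (c₀ e - 1) = phi (c₀ f - 1))
    have h1 := hrange e he
    have h2 := hrange f hf
    exact hp₀ e he f hf hef hshare (by omega)
  · rintro e he f hf hef ⟨x, hxe, hxf⟩ hsum
    obtain ⟨v, rfl⟩ := Sym2.mem_iff_exists.mp hxe
    obtain ⟨w, rfl⟩ := Sym2.mem_iff_exists.mp hxf
    have hadj1 : G.Adj x v := (SimpleGraph.mem_edgeSet G).mp he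
    have hadj2 : G.Adj x w := (SimpleGraph.mem_edgeSet G).mp hf
    have E1 := nbrSum_eq G c hadj1
    have E2 := nbrSum_eq G c hadj2
    obtain ⟨μv, Mv⟩ := missing G d hreg c₀ hc₀ hp₀ c hc v
    obtain ⟨μw, Mw⟩ := missing G d hreg c₀ hc₀ hp₀ c hc w
    have hce : c s(x,v) = phi (c₀ s(x,v) - 1) + 1 := rfl
    have hcf : c s(x,w) = phi (c₀ s(x,w) - 1) + 1 := rfl
    have key : phi (μv - 1) + 2 * phi (c₀ s(x,v) - 1)
        = phi (μw - 1) + 2 * phi (c₀ s(x,w) - 1) := by omega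
    have hvw := (phi_key _ (μv-1) (c₀ s(x,v) - 1) (μw-1) (c₀ s(x,w) - 1) le_rfl key).2
    have h1 := hrange _ he
    have h2 := hrange _ hf
    exact hp₀ _ he _ hf hef ⟨x, by simp, by simp⟩ (by omega)

/-- If `G` is `d`-regular with chromatic index `d+1`, then
`η'_p(G) ≤ ((2 ^ ⌈log₂ (d+1)⌉) ^ 2 + 2) / 3`; in particular if `d + 1 = 2 ^ n`
with `n > 0` then `η'_p(G) ≤ ((d+1) ^ 2 + 2) / 3`.  (The divisions are exact.) -/
theorem properAddIndex_le_of_class2 (G : SimpleGraph V) (d : ℕ)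
    (hreg : G.IsRegularOfDegree d) (hchrom : chromIndex G = d + 1) :
    properAddIndex G ≤ ((2 ^ Nat.clog 2 (d + 1)) ^ 2 + 2) / 3 ∧
      (∀ n : ℕ, 0 < n → d + 1 = 2 ^ n →
        properAddIndex G ≤ ((d + 1) ^ 2 + 2) / 3) := by
  have hpow2 : ∀ m : ℕ, ((2:ℕ)^m)^2 = 4^m := by
    intro m
    rw [← pow_mul, show (4:ℕ) = 2^2 from rfl, ← pow_mul, Nat.mul_comm]
  have hSne : {k | ∃ c : Sym2 V → ℕ, (∀ e ∈ G.edgeSet, c e ∈ Finset.Icc 1 k) ∧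
      IsProperEdgeColoring G c}.Nonempty := by
    by_contra hne
    rw [Set.not_nonempty_iff_eq_empty] at hne
    rw [chromIndex, hne, Nat.sInf_empty] at hchrom
    omega
  have hmem := Nat.sInf_mem hSne
  rw [show sInf {k | ∃ c : Sym2 V → ℕ, (∀ e ∈ G.edgeSet, c e ∈ Finset.Icc 1 k) ∧
      IsProperEdgeColoring G c} = chromIndex G from rfl, hchrom] at hmem
  obtain ⟨c₀, hc₀, hp₀⟩ := hmem
  have main : ∀ m : ℕ, d + 1 ≤ 2^m → properAddIndex G ≤ (4^m + 2)/3 := by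
    intro m hdm
    obtain ⟨c, hb, hpc, hac⟩ := exists_good G d m hreg c₀ hc₀ hp₀ hdm
    exact Nat.sInf_le ⟨c, hb, hpc, hac⟩
  constructor
  · rw [hpow2]
    exact main _ (Nat.le_pow_clog one_lt_two _)
  · intro n hn hd
    rw [hd, hpow2]
    exact main n (le_of_eq hd)


end AddEdge
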